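/- arXiv:1512.06411 — 2 statements merged into one kernel-verified Lean document; each statement's English description precedes it below -/
import Mathlib

section
/- The formal power series ∑_{n≥0} binomial(n+3,3) q^n + ∑_{s≥1} (10·binomial(s,3) + 11·binomial(s,2) + s) q^{2s} + ∑_{s≥0} (10·binomial(s,3) + 16·binomial(s,2) + 6s) q^{2s+1} equals the rational function (1 + 4q + 7q² + 10q³ + 10q⁴ + 4q⁵)/(1-q²)⁴, i.e., the power series multiplied by (1-q²)⁴ equals the polynomial 1 + 4q + 7q² + 10q³ + 10q⁴ + 4q⁵. -/
open PowerSeries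

lemma c2' (m : ℕ) : ((m.choose 2 : ℕ) : ℤ) * 2 = m * (m - 1) := by
  induction m with
  | zero => norm_num
  | succ k ih =>
    rw [Nat.choose_succ_succ, Nat.choose_one_right]
    push_cast
    linear_combination ih

lemma c3' (m : ℕ) : ((m.choose 3 : ℕ) : ℤ) * 6 = m * (m - 1) * (m - 2) := by
  induction m with
  | zero => norm_num
  | succ k ih =>
    rw [Nat.choose_succ_succ]
    push_cast
    linear_combination 3 * c2' k + ih

set_option maxHeartbeats 1600000 in
/-- The power series `∑_{n≥0} C(n+3,3) q^n + ∑_{s≥1} (10C(s,3)+11C(s,2)+s) q^{2s}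
  + ∑_{s≥0} (10C(s,3)+16C(s,2)+6s) q^{2s+1}` times `(1-q²)⁴` equals
  `1 + 4q + 7q² + 10q³ + 10q⁴ + 4q⁵`. -/
theorem stmt_3 :
    (PowerSeries.mk (fun n => (Nat.choose (n + 3) 3 : ℤ))
      + PowerSeries.mk (fun d =>
          if d % 2 = 0 ∧ d ≠ 0 then
            (10 * Nat.choose (d / 2) 3 + 11 * Nat.choose (d / 2) 2 + d / 2 : ℤ)
          else 0)
      + PowerSeries.mk (fun d =>
          if d % 2 = 1 then
            (10 * Nat.choose (d / 2) 3 + 16 * Nat.choose (d / 2) 2 + 6 * (d / 2) : ℤ)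
          else 0))
      * (1 - (PowerSeries.X : PowerSeries ℤ) ^ 2) ^ 4
    = 1 + 4 * PowerSeries.X + 7 * PowerSeries.X ^ 2 + 10 * PowerSeries.X ^ 3
        + 10 * PowerSeries.X ^ 4 + 4 * PowerSeries.X ^ 5 := by
  set f : PowerSeries ℤ := _ + _ + _ with hf
  rw [show f * (1 - X^2)^4 = f - (4:ℤ) • (f * X^2) + (6:ℤ) • (f * X^4) - (4:ℤ) • (f * X^6) + f * X^8
      from by simp only [zsmul_eq_mul]; push_cast; ring,
    show (1 + 4 * X + 7 * X ^ 2 + 10 * X ^ 3 + 10 * X ^ 4 + 4 * X ^ 5 : PowerSeries ℤ)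
      = 1 + (4:ℤ) • X + (7:ℤ) • X^2 + (10:ℤ) • X^3 + (10:ℤ) • X^4 + (4:ℤ) • X^5
      from by simp only [zsmul_eq_mul]; push_cast; ring]
  ext n
  simp only [hf, map_add, map_sub, map_smul, map_zsmul, smul_eq_mul, coeff_mul_X_pow', coeff_mk,
    coeff_one, PowerSeries.coeff_X, coeff_X_pow]
  rcases Nat.lt_or_ge n 9 with h | h
  · interval_cases n <;> decide
  · obtain ⟨k, rfl | rfl⟩ := Nat.even_or_odd' n
    · obtain ⟨t, rfl⟩ : ∃ t, k = t + 5 := ⟨k - 5, by omega⟩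
      simp only [show 2*(t+5)-2 = 2*t+8 from by omega, show 2*(t+5)-4 = 2*t+6 from by omega,
        show 2*(t+5)-6 = 2*t+4 from by omega, show 2*(t+5)-8 = 2*t+2 from by omega,
        show (2*(t+5))/2 = t+5 from by omega, show (2*t+8)/2 = t+4 from by omega,
        show (2*t+6)/2 = t+3 from by omega, show (2*t+4)/2 = t+2 from by omega,
        show (2*t+2)/2 = t+1 from by omega,
        show ((2*(t+5) : ℕ) : ℤ)/2 = (t : ℤ)+5 from by omega,
        show ((2*t+8 : ℕ) : ℤ)/2 = (t : ℤ)+4 from by omega,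
        show ((2*t+6 : ℕ) : ℤ)/2 = (t : ℤ)+3 from by omega,
        show ((2*t+4 : ℕ) : ℤ)/2 = (t : ℤ)+2 from by omega,
        show ((2*t+2 : ℕ) : ℤ)/2 = (t : ℤ)+1 from by omega,
        show 2*(t+5)+3 = 2*t+13 from by omega, show 2*t+8+3 = 2*t+11 from by omega,
        show 2*t+6+3 = 2*t+9 from by omega, show 2*t+4+3 = 2*t+7 from by omega,
        show 2*t+2+3 = 2*t+5 from by omega,
        eq_true (show (2:ℕ) ≤ 2*(t+5) from by omega),
        eq_true (show (4:ℕ) ≤ 2*(t+5) from by omega),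
        eq_true (show (6:ℕ) ≤ 2*(t+5) from by omega),
        eq_true (show (8:ℕ) ≤ 2*(t+5) from by omega),
        eq_true (show (2*(t+5))%2 = 0 ∧ 2*(t+5) ≠ 0 from by omega),
        eq_true (show (2*t+8)%2 = 0 ∧ 2*t+8 ≠ 0 from by omega),
        eq_true (show (2*t+6)%2 = 0 ∧ 2*t+6 ≠ 0 from by omega),
        eq_true (show (2*t+4)%2 = 0 ∧ 2*t+4 ≠ 0 from by omega),
        eq_true (show (2*t+2)%2 = 0 ∧ 2*t+2 ≠ 0 from by omega),
        eq_false (show ¬((2*(t+5))%2 = 1) from by omega),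
        eq_false (show ¬((2*t+8)%2 = 1) from by omega),
        eq_false (show ¬((2*t+6)%2 = 1) from by omega),
        eq_false (show ¬((2*t+4)%2 = 1) from by omega),
        eq_false (show ¬((2*t+2)%2 = 1) from by omega),
        eq_false (show ¬(2*(t+5) = 0) from by omega),
        eq_false (show ¬(2*(t+5) = 1) from by omega),
        eq_false (show ¬(2*(t+5) = 2) from by omega),
        eq_false (show ¬(2*(t+5) = 3) from by omega),
        eq_false (show ¬(2*(t+5) = 4) from by omega),
        eq_false (show ¬(2*(t+5) = 5) from by omega),
        if_true, if_false]
      have e1 := c3' (2*t+13); have e2 := c3' (2*t+11); have e3 := c3' (2*t+9)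
      have e4 := c3' (2*t+7); have e5 := c3' (2*t+5)
      have f1 := c3' (t+5); have f2 := c3' (t+4); have f3 := c3' (t+3)
      have f4 := c3' (t+2); have f5 := c3' (t+1)
      have g1 := c2' (t+5); have g2 := c2' (t+4); have g3 := c2' (t+3)
      have g4 := c2' (t+2); have g5 := c2' (t+1)
      push_cast at e1 e2 e3 e4 e5 f1 f2 f3 f4 f5 g1 g2 g3 g4 g5 ⊢
      linarith [e1, e2, e3, e4, e5, f1, f2, f3, f4, f5, g1, g2, g3, g4, g5]
    · obtain ⟨t, rfl⟩ : ∃ t, k = t + 4 := ⟨k - 4, by omega⟩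
      simp only [show 2*(t+4)+1-2 = 2*t+7 from by omega, show 2*(t+4)+1-4 = 2*t+5 from by omega,
        show 2*(t+4)+1-6 = 2*t+3 from by omega, show 2*(t+4)+1-8 = 2*t+1 from by omega,
        show (2*(t+4)+1)/2 = t+4 from by omega, show (2*t+7)/2 = t+3 from by omega,
        show (2*t+5)/2 = t+2 from by omega, show (2*t+3)/2 = t+1 from by omega,
        show (2*t+1)/2 = t from by omega,
        show ((2*(t+4)+1 : ℕ) : ℤ)/2 = (t : ℤ)+4 from by omega,
        show ((2*t+7 : ℕ) : ℤ)/2 = (t : ℤ)+3 from by omega,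
        show ((2*t+5 : ℕ) : ℤ)/2 = (t : ℤ)+2 from by omega,
        show ((2*t+3 : ℕ) : ℤ)/2 = (t : ℤ)+1 from by omega,
        show ((2*t+1 : ℕ) : ℤ)/2 = (t : ℤ) from by omega,
        show 2*(t+4)+1+3 = 2*t+12 from by omega, show 2*t+7+3 = 2*t+10 from by omega,
        show 2*t+5+3 = 2*t+8 from by omega, show 2*t+3+3 = 2*t+6 from by omega,
        show 2*t+1+3 = 2*t+4 from by omega,
        eq_true (show (2:ℕ) ≤ 2*(t+4)+1 from by omega),
        eq_true (show (4:ℕ) ≤ 2*(t+4)+1 from by omega),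
        eq_true (show (6:ℕ) ≤ 2*(t+4)+1 from by omega),
        eq_true (show (8:ℕ) ≤ 2*(t+4)+1 from by omega),
        eq_true (show (2*(t+4)+1)%2 = 1 from by omega),
        eq_true (show (2*t+7)%2 = 1 from by omega),
        eq_true (show (2*t+5)%2 = 1 from by omega),
        eq_true (show (2*t+3)%2 = 1 from by omega),
        eq_true (show (2*t+1)%2 = 1 from by omega),
        eq_false (show ¬((2*(t+4)+1)%2 = 0 ∧ 2*(t+4)+1 ≠ 0) from by omega),
        eq_false (show ¬((2*t+7)%2 = 0 ∧ 2*t+7 ≠ 0) from by omega),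
        eq_false (show ¬((2*t+5)%2 = 0 ∧ 2*t+5 ≠ 0) from by omega),
        eq_false (show ¬((2*t+3)%2 = 0 ∧ 2*t+3 ≠ 0) from by omega),
        eq_false (show ¬((2*t+1)%2 = 0 ∧ 2*t+1 ≠ 0) from by omega),
        eq_false (show ¬(2*(t+4)+1 = 0) from by omega),
        eq_false (show ¬(2*(t+4)+1 = 1) from by omega),
        eq_false (show ¬(2*(t+4)+1 = 2) from by omega),
        eq_false (show ¬(2*(t+4)+1 = 3) from by omega),
        eq_false (show ¬(2*(t+4)+1 = 4) from by omega),
        eq_false (show ¬(2*(t+4)+1 = 5) from by omega),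
        if_true, if_false]
      have e1 := c3' (2*t+12); have e2 := c3' (2*t+10); have e3 := c3' (2*t+8)
      have e4 := c3' (2*t+6); have e5 := c3' (2*t+4)
      have f1 := c3' (t+4); have f2 := c3' (t+3); have f3 := c3' (t+2)
      have f4 := c3' (t+1); have f5 := c3' t
      have g1 := c2' (t+4); have g2 := c2' (t+3); have g3 := c2' (t+2)
      have g4 := c2' (t+1); have g5 := c2' t
      push_cast at e1 e2 e3 e4 e5 f1 f2 f3 f4 f5 g1 g2 g3 g4 g5 ⊢
      linarith [e1, e2, e3, e4, e5, f1, f2, f3, f4, f5, g1, g2, g3, g4, g5]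
end

section
/- Let α be a positive irrational real number, β = α/(α+1), and c_d = ⌊dβ⌋ - ⌊(d-1)β⌋ for d ≥ 1. Then c_d ∈ {0,1} for all d ≥ 1, and the formal power series H(q) = 1/(1-q) + ∑_{d≥1} ⌊dβ⌋ q^d over ℚ is not a rational function: there exist no polynomials P, Q ∈ ℚ[q], Q ≠ 0, with Q·H = P in ℚ[[q]]. -/
open Polynomial Finset

lemma floorgap (β x : ℝ) (h0 : 0 ≤ β) (h1 : β ≤ 1) :
    ⌊x*β⌋ ≤ ⌊(x+1)*β⌋ ∧ ⌊(x+1)*β⌋ ≤ ⌊x*β⌋ + 1 := by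
  constructor
  · exact Int.floor_le_floor (by nlinarith)
  · have h : ⌊(x+1)*β⌋ ≤ ⌊x*β + 1⌋ := Int.floor_le_floor (by nlinarith)
    simpa [Int.floor_add_one] using h

lemma aux_not_rat (β : ℝ) (h0 : 0 ≤ β) (h1 : β ≤ 1) (hirr : Irrational β) :
    ¬ ∃ P Q : Polynomial ℚ, Q ≠ 0 ∧
      (Q : PowerSeries ℚ) * PowerSeries.mk (fun d => (1 : ℚ) + (⌊(d : ℝ) * β⌋ : ℤ))
        = (P : PowerSeries ℚ) := by
  rintro ⟨P, Q, hQ, hE⟩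
  set A : ℕ → ℤ := fun d => ⌊(d : ℝ) * β⌋ with hA
  set h : ℕ → ℚ := fun n => if n = 0 then 1 else ((A n - A (n-1) : ℤ) : ℚ) with hh
  -- Step B: (1-X) * H = mk h
  have hB : (1 - PowerSeries.X) * PowerSeries.mk (fun d => (1 : ℚ) + (⌊(d : ℝ) * β⌋ : ℤ))
      = PowerSeries.mk h := by
    ext n
    rw [sub_mul, one_mul, map_sub]
    cases n with
    | zero => simp [hh, hA]
    | succ k => simp [PowerSeries.coeff_succ_X_mul, hh, hA]
  -- Step A: Q * mk h = P₂
  set P₂ : Polynomial ℚ := (1 - Polynomial.X) * P with hP₂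
  have hG : (Q : PowerSeries ℚ) * PowerSeries.mk h = (P₂ : PowerSeries ℚ) := by
    rw [← hB, mul_left_comm, hE, hP₂]
    push_cast
    rfl
  -- Step C: h values in {0,1}
  have hval : ∀ n, h n = 0 ∨ h n = 1 := by
    intro n
    cases n with
    | zero => right; simp [hh]
    | succ k =>
      have hg := floorgap β k h0 h1
      have e1 : ((k : ℝ) + 1) = ((k+1 : ℕ) : ℝ) := by push_cast; ring
      rw [e1] at hg
      simp only [hh, hA]
      have : A (k+1) - A k = 0 ∨ A (k+1) - A k = 1 := by simp only [hA]; omega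
      rcases this with h' | h'
      · left; simp; rw [e1]; exact_mod_cast h'
      · right; simp; rw [e1]; exact_mod_cast h'
  -- Step D: recurrence
  set t := Q.natTrailingDegree with ht
  set D := Q.natDegree with hD
  have htD : t ≤ D := Polynomial.natTrailingDegree_le_natDegree Q
  set L := D - t + 1 with hL
  set N₀ := P₂.natDegree + 1 with hN₀
  have hrec : ∀ m, N₀ ≤ m → ∑ i ∈ Icc t D, Q.coeff i * h (m + t + L - i) = 0 := by
    intro m hm
    set n := m + t + L with hn
    have hcoeff : (PowerSeries.coeff n) ((Q : PowerSeries ℚ) * PowerSeries.mk h) = 0 := by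
      rw [hG, Polynomial.coeff_coe]
      exact Polynomial.coeff_eq_zero_of_natDegree_lt (by omega)
    rw [PowerSeries.coeff_mul] at hcoeff
    rw [Finset.Nat.sum_antidiagonal_eq_sum_range_succ_mk] at hcoeff
    simp only [Polynomial.coeff_coe, PowerSeries.coeff_mk] at hcoeff
    have hsub : Icc t D ⊆ Finset.range (n+1) := by
      intro i hi
      simp only [mem_Icc] at hi
      simp only [Finset.mem_range]
      omega
    rw [← Finset.sum_subset hsub] at hcoeff
    · exact hcoeff
    · intro i hi hni
      simp only [mem_Icc] at hni
      rcases Nat.lt_or_ge i t with h' | h'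
      · rw [Polynomial.coeff_eq_zero_of_lt_natTrailingDegree h', zero_mul]
      · rw [Polynomial.coeff_eq_zero_of_natDegree_lt (by omega), zero_mul]
  -- Step E: determination
  have hQt : Q.coeff t ≠ 0 := Polynomial.coeff_natTrailingDegree_ne_zero.mpr hQ
  have hdet : ∀ m₁ m₂, N₀ ≤ m₁ → N₀ ≤ m₂ →
      (∀ j, j < L → h (m₁ + j) = h (m₂ + j)) → h (m₁ + L) = h (m₂ + L) := by
    intro m₁ m₂ hm₁ hm₂ hwin
    have hsplit : Icc t D = insert t (Icc (t+1) D) := by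
      ext i; simp only [mem_Icc, Finset.mem_insert]; omega
    have hnotmem : t ∉ Icc (t+1) D := by simp only [mem_Icc]; omega
    have e₁ := hrec m₁ hm₁
    have e₂ := hrec m₂ hm₂
    rw [hsplit, Finset.sum_insert hnotmem] at e₁ e₂
    have heqsum : ∑ i ∈ Icc (t+1) D, Q.coeff i * h (m₁ + t + L - i)
        = ∑ i ∈ Icc (t+1) D, Q.coeff i * h (m₂ + t + L - i) := by
      apply Finset.sum_congr rfl
      intro i hi
      simp only [mem_Icc] at hi
      have e1 : m₁ + t + L - i = m₁ + (t + L - i) := by omega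
      have e2 : m₂ + t + L - i = m₂ + (t + L - i) := by omega
      rw [e1, e2, hwin (t + L - i) (by omega)]
    have e3 : m₁ + t + L - t = m₁ + L := by omega
    have e4 : m₂ + t + L - t = m₂ + L := by omega
    rw [e3] at e₁; rw [e4] at e₂
    have : Q.coeff t * h (m₁ + L) = Q.coeff t * h (m₂ + L) := by linarith [heqsum]
    exact mul_left_cancel₀ hQt this
  -- Step F: pigeonhole
  set N := max N₀ 1 with hN
  have hLpos : 0 < L := by omega
  have : ∃ m₁ m₂ : ℕ, m₁ < m₂ ∧ ∀ j, j < L → h (N + m₁ + j) = h (N + m₂ + j) := by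
    set g : ℕ → (Fin L → Bool) := fun m j => decide (h (N + m + j.1) = 1) with hg
    obtain ⟨x, y, hxy, hgxy⟩ := Finite.exists_ne_map_eq_of_infinite g
    have key : ∀ x y : ℕ, g x = g y → ∀ j, j < L → h (N + x + j) = h (N + y + j) := by
      intro x y hxy j hj
      have := congrFun hxy ⟨j, hj⟩
      simp only [hg, decide_eq_decide] at this
      rcases hval (N + x + j) with h' | h' <;> rcases hval (N + y + j) with h'' | h'' <;>
        simp [h', h''] at this ⊢ <;> tauto
    rcases Nat.lt_or_ge x y with hlt | hge
    · exact ⟨x, y, hlt, key x y hgxy⟩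
    · have hlt : y < x := by omega
      exact ⟨y, x, hlt, key y x hgxy.symm⟩
  obtain ⟨m₁, m₂, hm12, hwin⟩ := this
  -- Step G: periodicity
  have hper : ∀ j, h (N + m₁ + j) = h (N + m₂ + j) := by
    intro j
    induction j using Nat.strong_induction_on with
    | _ j ih =>
      rcases Nat.lt_or_ge j L with hj | hj
      · exact hwin j hj
      · have e1 : N + m₁ + j = (N + m₁ + (j - L)) + L := by omega
        have e2 : N + m₂ + j = (N + m₂ + (j - L)) + L := by omega
        rw [e1, e2]
        apply hdet _ _ (by omega) (by omega)
        intro i hi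
        have e3 : N + m₁ + (j - L) + i = N + m₁ + (j - L + i) := by omega
        have e4 : N + m₂ + (j - L) + i = N + m₂ + (j - L + i) := by omega
        rw [e3, e4]
        exact ih (j - L + i) (by omega)
  -- Step H: telescope
  set M := N + m₁ with hM
  set p := m₂ - m₁ with hp
  have hppos : 0 < p := by omega
  have hper' : ∀ j, h (M + j) = h (M + p + j) := by
    intro j
    have e : N + m₂ + j = M + p + j := by omega
    rw [← e]; exact hper j
  have hMpos : 1 ≤ M := by omega
  have hd : ∀ j : ℕ, A (M + j + 1) - A (M + j) = A (M + p + j + 1) - A (M + p + j) := by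
    intro j
    have := hper' (j + 1)
    have e1 : h (M + (j+1)) = ((A (M + j + 1) - A (M + j) : ℤ) : ℚ) := by
      simp only [hh]
      rw [if_neg (by omega)]
      congr 2 <;> omega
    have e2 : h (M + p + (j+1)) = ((A (M + p + j + 1) - A (M + p + j) : ℤ) : ℚ) := by
      simp only [hh]
      rw [if_neg (by omega)]
      congr 2 <;> omega
    rw [e1, e2] at this
    exact_mod_cast this
  set s : ℤ := A (M + p) - A M with hs
  have htel : ∀ j : ℕ, A (M + p + j) - A (M + j) = s := by
    intro j
    induction j with
    | zero => simp [hs]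
    | succ k ih =>
      have := hd k
      have e1 : M + p + (k+1) = M + p + k + 1 := by omega
      have e2 : M + (k+1) = M + k + 1 := by omega
      rw [e1, e2]
      omega
  have hk : ∀ k : ℕ, A (M + k * p) = A M + k * s := by
    intro k
    induction k with
    | zero => simp
    | succ j ih =>
      have := htel (j * p)
      have e1 : M + (j+1) * p = M + p + j * p := by ring
      rw [e1]
      push_cast
      push_cast at ih
      linarith [this, ih]
  -- Step I: bound and contradiction
  have hfloor : ∀ n : ℕ, ((A n : ℝ)) ≤ (n : ℝ) * β ∧ (n : ℝ) * β < (A n : ℝ) + 1 := by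
    intro n
    exact ⟨Int.floor_le _, Int.lt_floor_add_one _⟩
  have hbound : ∀ k : ℕ, |(k : ℝ) * ((p : ℝ) * β - (s : ℝ))| < 1 := by
    intro k
    have h1' := hfloor (M + k * p)
    have h2' := hfloor M
    have hk' := hk k
    have e : ((A (M + k*p) : ℝ)) = (A M : ℝ) + (k : ℝ) * (s : ℝ) := by exact_mod_cast congrArg (fun z : ℤ => (z : ℝ)) hk'
    rw [e] at h1'
    have ecast : ((M + k*p : ℕ) : ℝ) = (M : ℝ) + (k : ℝ) * (p : ℝ) := by push_cast; ring
    rw [ecast] at h1'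
    rw [abs_lt]
    constructor <;> nlinarith [h1'.1, h1'.2, h2'.1, h2'.2]
  have heq : (p : ℝ) * β = (s : ℝ) := by
    by_contra hne
    have hεpos : 0 < |(p : ℝ) * β - (s : ℝ)| := abs_pos.mpr (sub_ne_zero.mpr hne)
    obtain ⟨k, hkk⟩ := exists_nat_ge (1 / |(p : ℝ) * β - (s : ℝ)|)
    have := hbound (k + 1)
    rw [abs_mul, Nat.abs_cast] at this
    have hk1 : (1:ℝ)/|(p : ℝ) * β - (s : ℝ)| < ((k:ℝ)+1) := by push_cast at *; linarith
    rw [div_lt_iff₀ hεpos] at hk1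
    push_cast at this
    nlinarith [this, hk1]
  exact hirr ⟨(s : ℚ) / (p : ℚ), by
    have hp0 : (p : ℝ) ≠ 0 := by positivity
    push_cast
    rw [div_eq_iff hp0]
    linarith [heq]⟩


/-- For `α > 0` irrational and `β = α/(α+1)`: `c_d = ⌊dβ⌋ - ⌊(d-1)β⌋ ∈ {0,1}` for all
`d ≥ 1`, and the power series `H(q) = 1/(1-q) + ∑_{d≥1} ⌊dβ⌋ q^d = ∑_{d≥0} (1+⌊dβ⌋) q^d`
over `ℚ` is not a rational function. -/
theorem stmt_19 (α : ℝ) (hα : 0 < α) (hirr : Irrational α) :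
    let β : ℝ := α / (α + 1)
    (∀ d : ℕ, 1 ≤ d →
      ⌊(d : ℝ) * β⌋ - ⌊((d : ℝ) - 1) * β⌋ = 0 ∨ ⌊(d : ℝ) * β⌋ - ⌊((d : ℝ) - 1) * β⌋ = 1) ∧
    ¬ ∃ P Q : Polynomial ℚ, Q ≠ 0 ∧
      (Q : PowerSeries ℚ) * PowerSeries.mk (fun d => (1 : ℚ) + (⌊(d : ℝ) * β⌋ : ℤ))
        = (P : PowerSeries ℚ) := by
  intro β
  have ha1 : (0:ℝ) < α + 1 := by linarith
  have hb0 : 0 ≤ β := le_of_lt (by positivity)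
  have hb1 : β < 1 := by
    rw [div_lt_one ha1]; linarith
  have hbirr : Irrational β := by
    rintro ⟨r, hr⟩
    have hr1 : (r : ℝ) < 1 := by rw [hr]; exact hb1
    have hrne : (1:ℝ) - (r:ℝ) ≠ 0 := by linarith
    apply hirr
    refine ⟨r / (1 - r), ?_⟩
    have hβα : β * (α + 1) = α := div_mul_cancel₀ α (ne_of_gt ha1)
    rw [← hr] at hβα
    push_cast
    rw [div_eq_iff hrne]
    nlinarith [hβα]
  constructor
  · intro d hd
    have hg := floorgap β ((d:ℝ) - 1) hb0 (le_of_lt hb1)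
    have e : (d:ℝ) - 1 + 1 = (d:ℝ) := by ring
    rw [e] at hg
    omega
  · exact aux_not_rat β hb0 (le_of_lt hb1) hbirr
end
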